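/- (Inclusion Theorem) Let 1 ≤ p ≤ q < ∞. Every factorable strongly p-summing m-homogeneous polynomial P : X → Y between Banach spaces is factorable strongly q-summing. -/

import Mathlib

open scoped BigOperators
open MeasureTheory

noncomputable section

section Defs

variable (𝕜 : Type*) [RCLike 𝕜]

section Multi

variable {n : ℕ} {X : Fin n → Type*} {Y : Type*}
  [∀ k, NormedAddCommGroup (X k)] [∀ k, NormedSpace 𝕜 (X k)]
  [NormedAddCommGroup Y] [NormedSpace 𝕜 Y]

/-- `C` witnesses the defining inequality of factorable strongly `p`-summing
multilinear operators. -/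
def FactStronglySummingBound (p : ℝ) (T : ContinuousMultilinearMap 𝕜 X Y) (C : ℝ) : Prop :=
  0 ≤ C ∧ ∀ (m₁ m₂ : ℕ) (x : Fin m₁ → Fin m₂ → (∀ k, X k)) (lam : Fin m₁ → Fin m₂ → 𝕜),
    (∑ j, ‖∑ i, lam j i • T (x j i)‖ ^ p) ^ (1 / p) ≤
      C * ⨆ φ : {φ : ContinuousMultilinearMap 𝕜 X 𝕜 // ‖φ‖ ≤ 1},
        (∑ j, ‖∑ i, lam j i • φ.1 (x j i)‖ ^ p) ^ (1 / p)

/-- Factorable strongly `p`-summing continuous multilinear operators. -/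
def FactStronglySumming (p : ℝ) (T : ContinuousMultilinearMap 𝕜 X Y) : Prop :=
  ∃ C, FactStronglySummingBound 𝕜 p T C

/-- The factorable strongly `p`-summing norm `‖T‖_{FSt,p}` (the least admissible constant). -/
def fstMultiNorm (p : ℝ) (T : ContinuousMultilinearMap 𝕜 X Y) : ℝ :=
  sInf {C | FactStronglySummingBound 𝕜 p T C}

/-- Strongly `p`-summing continuous multilinear operators (Dimant). -/
def StronglySumming (p : ℝ) (T : ContinuousMultilinearMap 𝕜 X Y) : Prop :=
  ∃ C : ℝ, 0 ≤ C ∧ ∀ (m : ℕ) (x : Fin m → (∀ k, X k)),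
    (∑ j, ‖T (x j)‖ ^ p) ^ (1 / p) ≤
      C * ⨆ φ : {φ : ContinuousMultilinearMap 𝕜 X 𝕜 // ‖φ‖ ≤ 1},
        (∑ j, ‖φ.1 (x j)‖ ^ p) ^ (1 / p)

/-- Factorable `p`-dominated continuous multilinear operators. -/
def FactorablePDominated (p : ℝ) (T : ContinuousMultilinearMap 𝕜 X Y) : Prop :=
  ∃ C : ℝ, 0 ≤ C ∧ ∀ (m₁ m₂ : ℕ) (x : Fin m₁ → Fin m₂ → (∀ k, X k))
    (lam : Fin m₁ → Fin m₂ → 𝕜),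
    (∑ j, ‖∑ i, lam j i • T (x j i)‖ ^ p) ^ (1 / p) ≤
      C * ⨆ φ : ∀ k, {f : X k →L[𝕜] 𝕜 // ‖f‖ ≤ 1},
        (∑ j, ‖∑ i, lam j i • ∏ k, (φ k).1 (x j i k)‖ ^ p) ^ (1 / p)

/-- `p`-semi-integral continuous multilinear operators. -/
def PSemiIntegral (p : ℝ) (T : ContinuousMultilinearMap 𝕜 X Y) : Prop :=
  ∃ C : ℝ, 0 ≤ C ∧ ∀ (m : ℕ) (x : Fin m → (∀ k, X k)),
    (∑ j, ‖T (x j)‖ ^ p) ^ (1 / p) ≤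
      C * ⨆ φ : ∀ k, {f : X k →L[𝕜] 𝕜 // ‖f‖ ≤ 1},
        (∑ j, ‖∏ k, (φ k).1 (x j k)‖ ^ p) ^ (1 / p)

end Multi

section Poly

variable {X Y : Type*} [NormedAddCommGroup X] [NormedSpace 𝕜 X]
  [NormedAddCommGroup Y] [NormedSpace 𝕜 Y]

/-- `P` is a continuous `m`-homogeneous polynomial: the diagonal of a continuous
`m`-linear map. -/
def IsHomogPoly (m : ℕ) (P : X → Y) : Prop :=
  ∃ T : ContinuousMultilinearMap 𝕜 (fun _ : Fin m => X) Y, ∀ x, P x = T (fun _ => x)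

/-- Sup norm of a (homogeneous polynomial) map on the closed unit ball. -/
def polyNorm (P : X → Y) : ℝ :=
  ⨆ x : {x : X // ‖x‖ ≤ 1}, ‖P x.1‖

/-- `C` witnesses the defining inequality of factorable strongly `p`-summing
`m`-homogeneous polynomials. -/
def FactStronglySummingPolyBound (m : ℕ) (p : ℝ) (P : X → Y) (C : ℝ) : Prop :=
  0 ≤ C ∧ ∀ (m₁ m₂ : ℕ) (x : Fin m₁ → Fin m₂ → X) (lam : Fin m₁ → Fin m₂ → 𝕜),
    (∑ j, ‖∑ i, lam j i • P (x j i)‖ ^ p) ^ (1 / p) ≤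
      C * ⨆ q : {q : X → 𝕜 // IsHomogPoly 𝕜 m q ∧ polyNorm q ≤ 1},
        (∑ j, ‖∑ i, lam j i • q.1 (x j i)‖ ^ p) ^ (1 / p)

/-- Factorable strongly `p`-summing `m`-homogeneous polynomials. -/
def FactStronglySummingPoly (m : ℕ) (p : ℝ) (P : X → Y) : Prop :=
  IsHomogPoly 𝕜 m P ∧ ∃ C, FactStronglySummingPolyBound 𝕜 m p P C

/-- The factorable strongly `p`-summing norm `‖P‖_{FSt,p}` of a polynomial. -/
def fstPolyNorm (m : ℕ) (p : ℝ) (P : X → Y) : ℝ :=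
  sInf {C | FactStronglySummingPolyBound 𝕜 m p P C}

/-- `C` witnesses the defining inequality of absolutely `p`-summing linear operators. -/
def AbsSummingBound (p : ℝ) (u : X →L[𝕜] Y) (C : ℝ) : Prop :=
  0 ≤ C ∧ ∀ (m : ℕ) (x : Fin m → X),
    (∑ j, ‖u (x j)‖ ^ p) ^ (1 / p) ≤
      C * ⨆ φ : {φ : X →L[𝕜] 𝕜 // ‖φ‖ ≤ 1}, (∑ j, ‖φ.1 (x j)‖ ^ p) ^ (1 / p)

/-- Absolutely `p`-summing continuous linear operators. -/
def AbsolutelySumming (p : ℝ) (u : X →L[𝕜] Y) : Prop :=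
  ∃ C, AbsSummingBound 𝕜 p u C

/-- The absolutely `p`-summing norm `π_p(u)` (the least admissible constant). -/
def piSummingNorm (p : ℝ) (u : X →L[𝕜] Y) : ℝ :=
  sInf {C | AbsSummingBound 𝕜 p u C}

end Poly

end Defs

end

section Aux

variable {𝕜 : Type*} [RCLike 𝕜] {X : Type*} [NormedAddCommGroup X] [NormedSpace 𝕜 X]

lemma homogPoly_norm_le {m : ℕ} {f : X → 𝕜} (hf : IsHomogPoly 𝕜 m f)
    (hnorm : polyNorm f ≤ 1) (x : X) : ‖f x‖ ≤ ‖x‖ ^ m := by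
  obtain ⟨T, hT⟩ := hf
  have hbdd : BddAbove (Set.range fun z : {z : X // ‖z‖ ≤ 1} => ‖f z.1‖) := by
    refine ⟨‖T‖, ?_⟩
    rintro _ ⟨z, rfl⟩
    simp only
    rw [hT]
    refine le_trans (T.le_opNorm _) ?_
    have : (∏ _i : Fin m, ‖z.1‖) ≤ 1 := by
      rw [Finset.prod_const]
      exact pow_le_one₀ (norm_nonneg _) z.2
    calc ‖T‖ * ∏ _i : Fin m, ‖z.1‖ ≤ ‖T‖ * 1 :=
          mul_le_mul_of_nonneg_left this (norm_nonneg T)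
      _ = ‖T‖ := mul_one _
  have hball : ∀ y : X, ‖y‖ ≤ 1 → ‖f y‖ ≤ 1 := by
    intro y hy
    exact le_trans (le_ciSup hbdd (⟨y, hy⟩ : {z : X // ‖z‖ ≤ 1})) hnorm
  by_cases hx : x = 0
  · subst hx
    cases m with
    | zero => simpa using hball 0 (by simp)
    | succ k =>
        have hzero : f (0 : X) = 0 := by
          rw [hT]
          have : (fun _ : Fin (k + 1) => (0 : X)) =
              Function.update (fun _ : Fin (k + 1) => (0 : X)) 0 0 := by
            simp [Function.update_eq_self]
          rw [this]
          exact T.map_coord_zero 0 rfl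
        simp [hzero]
  · have hc : (0 : ℝ) < ‖x‖ := norm_pos_iff.2 hx
    have hck : ((‖x‖ : 𝕜)) ≠ 0 := by
      simp [hc.ne']
    set u : X := ((‖x‖ : 𝕜))⁻¹ • x with hu
    have hun : ‖u‖ = 1 := by
      rw [hu, norm_smul, norm_inv, RCLike.norm_ofReal, abs_of_nonneg hc.le,
        inv_mul_cancel₀ hc.ne']
    have hxu : x = ((‖x‖ : 𝕜)) • u := by
      rw [hu, smul_inv_smul₀ hck]
    have hfx : f x = ((‖x‖ : 𝕜)) ^ m • f u := by
      rw [hT, hT]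
      conv_lhs => rw [hxu]
      have := T.map_smul_univ (fun _ : Fin m => ((‖x‖ : 𝕜))) (fun _ => u)
      simpa [Finset.prod_const] using this
    rw [hfx]
    rw [norm_smul, norm_pow, RCLike.norm_ofReal, abs_of_nonneg hc.le]
    calc ‖x‖ ^ m * ‖f u‖ ≤ ‖x‖ ^ m * 1 :=
          mul_le_mul_of_nonneg_left (hball u hun.le) (by positivity)
      _ = ‖x‖ ^ m := mul_one _

end Aux

/-- Inclusion Theorem: if `1 ≤ p ≤ q < ∞`, every factorable strongly
`p`-summing `m`-homogeneous polynomial is factorable strongly `q`-summing. -/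
theorem inclusion_factStronglySummingPoly
    {𝕜 : Type*} [RCLike 𝕜] {X Y : Type*}
    [NormedAddCommGroup X] [NormedSpace 𝕜 X] [CompleteSpace X]
    [NormedAddCommGroup Y] [NormedSpace 𝕜 Y] [CompleteSpace Y]
    (m : ℕ) (p q : ℝ) (hp : 1 ≤ p) (hpq : p ≤ q) (P : X → Y)
    (hP : FactStronglySummingPoly 𝕜 m p P) :
    FactStronglySummingPoly 𝕜 m q P := by
  obtain ⟨hHomog, C, hC0, hbd⟩ := hP
  have hp0 : (0 : ℝ) < p := lt_of_lt_of_le one_pos hp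
  have hq0 : (0 : ℝ) < q := lt_of_lt_of_le hp0 hpq
  refine ⟨hHomog, C, hC0, ?_⟩
  intro m₁ m₂ x lam
  haveI : Nonempty {z : X // ‖z‖ ≤ 1} := ⟨⟨0, by simp⟩⟩
  haveI hne : Nonempty {f : X → 𝕜 // IsHomogPoly 𝕜 m f ∧ polyNorm f ≤ 1} := by
    refine ⟨⟨0, ⟨0, by simp⟩, ?_⟩⟩
    have : polyNorm (0 : X → 𝕜) = 0 := by
      simp only [polyNorm, Pi.zero_apply, norm_zero]
      exact ciSup_const
    rw [this]; exact zero_le_one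
  -- the q-side supremum and its boundedness
  set F : {f : X → 𝕜 // IsHomogPoly 𝕜 m f ∧ polyNorm f ≤ 1} → ℝ :=
    fun φ => (∑ j, ‖∑ i, lam j i • φ.1 (x j i)‖ ^ q) ^ (1 / q) with hF
  have hbdq : BddAbove (Set.range F) := by
    refine ⟨(∑ j, (∑ i, ‖lam j i‖ * ‖x j i‖ ^ m) ^ q) ^ (1 / q), ?_⟩
    rintro _ ⟨φ, rfl⟩
    refine Real.rpow_le_rpow (by positivity) (Finset.sum_le_sum fun j _ => ?_) (by positivity)
    refine Real.rpow_le_rpow (norm_nonneg _) ?_ hq0.le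
    refine le_trans (norm_sum_le _ _) (Finset.sum_le_sum fun i _ => ?_)
    rw [norm_smul]
    exact mul_le_mul_of_nonneg_left (homogPoly_norm_le φ.2.1 φ.2.2 _) (norm_nonneg _)
  have hSqnn : 0 ≤ ⨆ φ, F φ := Real.iSup_nonneg fun φ => by positivity
  have hFle : ∀ φ, F φ ≤ ⨆ φ, F φ := fun φ => le_ciSup hbdq φ
  show (∑ j, ‖∑ i, lam j i • P (x j i)‖ ^ q) ^ (1 / q) ≤ C * ⨆ φ, F φ
  rcases eq_or_lt_of_le hpq with rfl | hlt
  · exact hbd m₁ m₂ x lam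
  -- main case p < q
  set a : Fin m₁ → ℝ := fun j => ‖∑ i, lam j i • P (x j i)‖ with ha
  have han : ∀ j, 0 ≤ a j := fun j => norm_nonneg _
  set A : ℝ := ∑ j, a j ^ q with hA
  have hAnn : 0 ≤ A := Finset.sum_nonneg fun j _ => Real.rpow_nonneg (han j) _
  by_cases hA0 : A = 0
  · rw [show ((∑ j, ‖∑ i, lam j i • P (x j i)‖ ^ q) ^ (1/q) : ℝ) = A ^ (1/q) from rfl,
      hA0, Real.zero_rpow (by positivity)]
    exact mul_nonneg hC0 hSqnn
  have hApos : 0 < A := lt_of_le_of_ne hAnn (Ne.symm hA0)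
  have hqp : (0 : ℝ) < q - p := by linarith
  set r : ℝ := p * q / (q - p) with hr
  have hr0 : 0 < r := by positivity
  set e : ℝ := q / p - 1 with he
  have he0 : 0 < e := by
    rw [he]
    have : 1 < q / p := (one_lt_div hp0).2 hlt
    linarith
  have her : e * r = q := by
    rw [he, hr]; field_simp
  have hep : (e + 1) * p = q := by
    rw [he]; field_simp; ring
  have hrr : (1 / r) * r = 1 := by
    field_simp
  have hexp : (1 - 1 / r * p) * (1 / p) = 1 / q := by
    rw [hr]; field_simp; ring
  have hpr : p < r := by
    rw [hr, lt_div_iff₀ hqp]; nlinarith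
  have hconj : (r / p).HolderConjugate (q / p) := by
    rw [Real.holderConjugate_iff]
    constructor
    · exact (one_lt_div hp0).2 hpr
    · rw [hr]; field_simp; ring
  set s : Fin m₁ → ℝ := fun j => a j ^ e / A ^ (1 / r) with hs
  have hsdef : ∀ j, s j = a j ^ e / A ^ (1 / r) := fun j => rfl
  have hsn : ∀ j, 0 ≤ s j := fun j => by
    rw [hsdef j]
    exact div_nonneg (Real.rpow_nonneg (han j) _) (Real.rpow_nonneg hAnn _)
  -- sum of s^r equals 1
  have hsr : ∑ j, s j ^ r = 1 := by
    have hstep : ∀ j, s j ^ r = a j ^ q / A := by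
      intro j
      rw [hsdef j,
        Real.div_rpow (Real.rpow_nonneg (han j) _) (Real.rpow_nonneg hAnn _),
        ← Real.rpow_mul (han j), ← Real.rpow_mul hAnn, her, hrr, Real.rpow_one]
    rw [Finset.sum_congr rfl fun j _ => hstep j, ← Finset.sum_div, ← hA, div_self hA0]
  -- apply the p-bound with scaled coefficients
  have key := hbd m₁ m₂ x (fun j i => ((s j : ℝ) : 𝕜) * lam j i)
  -- rewrite the left side of key
  have hnorml : ∀ (v : Fin m₂ → Y) j,
      ‖∑ i, (((s j : ℝ) : 𝕜) * lam j i) • v i‖ = s j * ‖∑ i, lam j i • v i‖ := by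
    intro v j
    rw [show (∑ i, (((s j : ℝ) : 𝕜) * lam j i) • v i)
        = ((s j : ℝ) : 𝕜) • ∑ i, lam j i • v i by
      rw [Finset.smul_sum]; exact Finset.sum_congr rfl fun i _ => mul_smul _ _ _]
    rw [norm_smul, RCLike.norm_ofReal, abs_of_nonneg (hsn j)]
  have hnormlk : ∀ (v : Fin m₂ → 𝕜) j,
      ‖∑ i, (((s j : ℝ) : 𝕜) * lam j i) • v i‖ = s j * ‖∑ i, lam j i • v i‖ := by
    intro v j
    rw [show (∑ i, (((s j : ℝ) : 𝕜) * lam j i) • v i)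
        = ((s j : ℝ) : 𝕜) • ∑ i, lam j i • v i by
      rw [Finset.smul_sum]; exact Finset.sum_congr rfl fun i _ => mul_smul _ _ _]
    rw [norm_smul, RCLike.norm_ofReal, abs_of_nonneg (hsn j)]
  have hlhs : (∑ j, ‖∑ i, (((s j : ℝ) : 𝕜) * lam j i) • P (x j i)‖ ^ p) ^ (1 / p)
      = A ^ (1 / q) := by
    have hterm : ∀ j, ‖∑ i, (((s j : ℝ) : 𝕜) * lam j i) • P (x j i)‖ ^ p
        = a j ^ q / A ^ (1 / r * p) := by
      intro j
      have haj' : ‖∑ i, lam j i • P (x j i)‖ = a j := rfl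
      rw [hnorml (fun i => P (x j i)) j, haj']
      by_cases haj : a j = 0
      · rw [haj, mul_zero, Real.zero_rpow hp0.ne', Real.zero_rpow hq0.ne', zero_div]
      · have hstep : s j * a j = a j ^ (e + 1) / A ^ (1 / r) := by
          rw [hsdef j, Real.rpow_add_one haj, div_mul_eq_mul_div]
        rw [hstep,
          Real.div_rpow (Real.rpow_nonneg (han j) _) (Real.rpow_nonneg hAnn _),
          ← Real.rpow_mul (han j), ← Real.rpow_mul hAnn, hep]
    rw [Finset.sum_congr rfl fun j _ => hterm j, ← Finset.sum_div, ← hA]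
    have hdiv : A / A ^ (1 / r * p) = A ^ (1 - 1 / r * p) := by
      rw [Real.rpow_sub hApos, Real.rpow_one]
    rw [hdiv, ← Real.rpow_mul hAnn, hexp]
  rw [hlhs] at key
  -- bound the p-side supremum by the q-side supremum
  have hsup : (⨆ φ : {f : X → 𝕜 // IsHomogPoly 𝕜 m f ∧ polyNorm f ≤ 1},
      (∑ j, ‖∑ i, (((s j : ℝ) : 𝕜) * lam j i) • φ.1 (x j i)‖ ^ p) ^ (1 / p))
      ≤ ⨆ φ, F φ := by
    refine Real.iSup_le (fun φ => ?_) hSqnn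
    have hbn : ∀ j, (0:ℝ) ≤ ‖∑ i, lam j i • φ.1 (x j i)‖ := fun j => norm_nonneg _
    have hrw : ∀ j, ‖∑ i, (((s j : ℝ) : 𝕜) * lam j i) • φ.1 (x j i)‖ ^ p
        = s j ^ p * ‖∑ i, lam j i • φ.1 (x j i)‖ ^ p := by
      intro j
      rw [hnormlk (fun i => φ.1 (x j i)) j, Real.mul_rpow (hsn j) (hbn j)]
    rw [Finset.sum_congr rfl fun j _ => hrw j]
    have holder := Real.inner_le_Lp_mul_Lq_of_nonneg Finset.univ hconj
      (f := fun j => s j ^ p) (g := fun j => ‖∑ i, lam j i • φ.1 (x j i)‖ ^ p)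
      (fun j _ => Real.rpow_nonneg (hsn j) _)
      (fun j _ => Real.rpow_nonneg (hbn j) _)
    have h1 : ∀ j, (s j ^ p) ^ (r / p) = s j ^ r := by
      intro j
      rw [← Real.rpow_mul (hsn j)]
      congr 1
      rw [mul_comm]
      exact div_mul_cancel₀ r hp0.ne'
    have h2 : ∀ j, ((‖∑ i, lam j i • φ.1 (x j i)‖ ^ p : ℝ)) ^ (q / p)
        = ‖∑ i, lam j i • φ.1 (x j i)‖ ^ q := by
      intro j
      rw [← Real.rpow_mul (hbn j)]
      congr 1
      rw [mul_comm]
      exact div_mul_cancel₀ q hp0.ne'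
    rw [Finset.sum_congr rfl (fun j _ => h1 j), Finset.sum_congr rfl (fun j _ => h2 j),
      hsr, Real.one_rpow, one_mul] at holder
    have hsum_nn : (0:ℝ) ≤ ∑ j, ‖∑ i, lam j i • φ.1 (x j i)‖ ^ q :=
      Finset.sum_nonneg fun j _ => Real.rpow_nonneg (hbn j) _
    calc (∑ j, s j ^ p * ‖∑ i, lam j i • φ.1 (x j i)‖ ^ p) ^ (1 / p)
        ≤ ((∑ j, ‖∑ i, lam j i • φ.1 (x j i)‖ ^ q) ^ (1 / (q / p))) ^ (1 / p) :=
          Real.rpow_le_rpow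
            (Finset.sum_nonneg fun j _ =>
              mul_nonneg (Real.rpow_nonneg (hsn j) _) (Real.rpow_nonneg (hbn j) _))
            holder (by positivity)
      _ = (∑ j, ‖∑ i, lam j i • φ.1 (x j i)‖ ^ q) ^ (1 / q) := by
          rw [← Real.rpow_mul hsum_nn]
          congr 1
          rw [one_div_div, div_mul_div_comm, mul_one, mul_comm q p, ← div_div,
            div_self hp0.ne']
      _ ≤ ⨆ φ, F φ := hFle φ
  calc (∑ j, ‖∑ i, lam j i • P (x j i)‖ ^ q) ^ (1 / q) = A ^ (1 / q) := rfl
    _ ≤ C * _ := key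
    _ ≤ C * ⨆ φ, F φ := mul_le_mul_of_nonneg_left hsup hC0
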